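/- Let λ ∈ (0,1) and θ ∈ (1/2, 1). Then the function f : ℝ → ℝ defined by f(c) = (c/((2θ−1+2cθ)(2−2θ−c(2θ−1))))^((1−θ)/(θ−1/2)) − (2θ−1+2cθ)²/(1−λ) has exactly one zero in the open interval ((1−θ)/θ, (1−θ)/(θ−1/2)); i.e., there exists a unique c ∈ ((1−θ)/θ, (1−θ)/(θ−1/2)) with f(c) = 0. -/

import Mathlib

open Real Set Filter Topology

theorem growth_optimal_f_unique_root_theta_between_half_and_one
    (lam θ : ℝ) (hlam : lam ∈ Set.Ioo (0:ℝ) 1) (hθ : θ ∈ Set.Ioo (1/2 : ℝ) 1)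
    (f : ℝ → ℝ)
    (hf : ∀ c : ℝ, f c =
      (c / ((2*θ - 1 + 2*c*θ) * (2 - 2*θ - c*(2*θ - 1)))) ^ ((1 - θ)/(θ - 1/2))
        - (2*θ - 1 + 2*c*θ)^2 / (1 - lam)) :
    ∃! c : ℝ, c ∈ Set.Ioo ((1 - θ)/θ) ((1 - θ)/(θ - 1/2)) ∧ f c = 0 := by
  obtain ⟨hlam0, hlam1⟩ := hlam
  obtain ⟨hθ1, hθ2⟩ := hθ
  have hθ0 : 0 < θ := by linarith
  have hq : 0 < 2*θ - 1 := by linarith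
  have hu : 0 < 1 - θ := by linarith
  have hhalf : (0:ℝ) < θ - 1/2 := by linarith
  have h1lam : 0 < 1 - lam := by linarith
  set a := (1 - θ)/θ with ha_def
  set b := (1 - θ)/(θ - 1/2) with hb_def
  have hb : 0 < b := div_pos hu hhalf
  have ha : 0 < a := div_pos hu hθ0
  have hab : a < b := by
    rw [ha_def, hb_def, div_lt_div_iff₀ hθ0 hhalf]
    nlinarith
  set A : ℝ → ℝ := fun c => 2*θ - 1 + 2*c*θ with hA_def
  set B : ℝ → ℝ := fun c => 2 - 2*θ - c*(2*θ - 1) with hB_def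
  have hApos : ∀ c, 0 < c → 0 < A c := by
    intro c hc
    simp only [hA_def]
    nlinarith
  have hBpos : ∀ c, c < b → 0 < B c := by
    intro c hc
    rw [hb_def, lt_div_iff₀ hhalf] at hc
    simp only [hB_def]
    nlinarith
  set ψ : ℝ → ℝ := fun c => b * Real.log c - (b + 2) * Real.log (A c)
      - b * Real.log (B c) with hψ_def
  -- f c = 0 ↔ ψ c = -log (1-lam) on the interval
  have hstar : ∀ c ∈ Ioo a b, (f c = 0 ↔ ψ c = -Real.log (1 - lam)) := by
    intro c hc
    have hc0 : 0 < c := lt_trans ha hc.1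
    have hA := hApos c hc0
    have hB := hBpos c hc.2
    have hg : 0 < c / (A c * B c) := div_pos hc0 (mul_pos hA hB)
    have hq2 : 0 < A c ^ 2 / (1 - lam) := div_pos (by positivity) h1lam
    rw [hf c]
    rw [show (c / ((2*θ - 1 + 2*c*θ) * (2 - 2*θ - c*(2*θ - 1)))) ^ ((1 - θ)/(θ - 1/2))
        - (2*θ - 1 + 2*c*θ)^2 / (1 - lam)
        = (c / (A c * B c)) ^ b - A c ^ 2 / (1 - lam) from rfl]
    rw [Real.rpow_def_of_pos hg, sub_eq_zero, ← Real.exp_log hq2, Real.exp_eq_exp,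
      Real.log_div (by positivity) h1lam.ne', Real.log_pow,
      Real.log_div hc0.ne' (by positivity), Real.log_mul hA.ne' hB.ne']
    push_cast
    simp only [hψ_def]
    constructor <;> intro h <;> linarith
  -- derivative of ψ
  have hderiv : ∀ c ∈ Ioo a b,
      HasDerivAt ψ (4*((1-θ) - θ*c)^2 / (c * (A c * B c))) c := by
    intro c hc
    have hc0 : 0 < c := lt_trans ha hc.1
    have hA := hApos c hc0
    have hB := hBpos c hc.2
    have hA' : HasDerivAt A (2*θ) c := by
      have h : HasDerivAt (fun x : ℝ => 2*θ - 1 + 2*x*θ) (2*θ) c := by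
        simpa [mul_assoc] using (((hasDerivAt_id c).mul_const θ).const_mul 2).const_add (2*θ - 1)
      exact h
    have hB' : HasDerivAt B (-(2*θ - 1)) c := by
      have h : HasDerivAt (fun x : ℝ => 2 - 2*θ - x*(2*θ - 1)) (-(2*θ - 1)) c := by
        simpa using ((hasDerivAt_id c).mul_const (2*θ - 1)).const_sub (2 - 2*θ)
      exact h
    have hlogc : HasDerivAt (fun x : ℝ => Real.log x) c⁻¹ c := Real.hasDerivAt_log hc0.ne'
    have hlogA : HasDerivAt (fun x => Real.log (A x)) (2*θ / A c) c := hA'.log hA.ne'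
    have hlogB : HasDerivAt (fun x => Real.log (B x)) (-(2*θ - 1) / B c) c := hB'.log hB.ne'
    have hraw : HasDerivAt ψ
        (b * c⁻¹ - (b + 2) * (2*θ / A c) - b * (-(2*θ - 1) / B c)) c := by
      simpa only [hψ_def, Pi.sub_def] using
        ((hlogc.const_mul b).sub (hlogA.const_mul (b + 2))).sub (hlogB.const_mul b)
    have hEq : b * c⁻¹ - (b + 2) * (2*θ / A c) - b * (-(2*θ - 1) / B c)
        = 4*((1-θ) - θ*c)^2 / (c * (A c * B c)) := by
      rw [hb_def]
      simp only [hA_def, hB_def]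
      have e1 : (2*θ - 1 + 2*c*θ) ≠ 0 := by simp only [hA_def] at hA; linarith
      have e2 : (2 - 2*θ - c*(2*θ - 1)) ≠ 0 := by simp only [hB_def] at hB; linarith
      have hb2 : (1-θ)/(θ-1/2) = 2*(1-θ)/(2*θ-1) := by
        rw [div_eq_div_iff hhalf.ne' hq.ne']; ring
      rw [hb2]
      have e1' : 2*θ - 1 + 2*θ*c ≠ 0 := by rw [mul_right_comm]; exact e1
      have e2' : 2*(1-θ) - (2*θ-1)*c ≠ 0 := by intro h; apply e2; linarith
      field_simp
      ring
    rwa [hEq] at hraw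
  -- positivity of the derivative on the open interval
  have hDpos : ∀ c ∈ Ioo a b, 0 < 4*((1-θ) - θ*c)^2 / (c * (A c * B c)) := by
    intro c hc
    have hc0 : 0 < c := lt_trans ha hc.1
    have hA := hApos c hc0
    have hB := hBpos c hc.2
    have hne : (1-θ) - θ*c ≠ 0 := by
      have : (1 - θ)/θ < c := hc.1
      rw [div_lt_iff₀ hθ0] at this
      nlinarith
    have hsq : 0 < ((1-θ) - θ*c)^2 :=
      lt_of_le_of_ne (sq_nonneg _) (Ne.symm (pow_ne_zero 2 hne))
    positivity
  -- continuity of ψ on [a, b)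
  have hcont : ContinuousOn ψ (Ico a b) := by
    simp only [hψ_def]
    have hcA : Continuous A := by simp only [hA_def]; fun_prop
    have hcB : Continuous B := by simp only [hB_def]; fun_prop
    refine ContinuousOn.sub (ContinuousOn.sub ?_ ?_) ?_
    · exact continuousOn_const.mul (Real.continuousOn_log.mono (by
        intro x hx
        exact (lt_of_lt_of_le ha hx.1).ne'))
    · exact continuousOn_const.mul ((hcA.continuousOn).log (fun x hx =>
        (hApos x (lt_of_lt_of_le ha hx.1)).ne'))
    · exact continuousOn_const.mul ((hcB.continuousOn).log (fun x hx =>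
        (hBpos x hx.2).ne'))
  -- strict monotonicity
  have hmono : StrictMonoOn ψ (Ico a b) := by
    apply strictMonoOn_of_deriv_pos (convex_Ico a b) hcont
    intro x hx
    rw [interior_Ico] at hx
    rw [(hderiv x hx).deriv]
    exact hDpos x hx
  -- ψ a = 0
  have hAa : A a = 1 := by
    simp only [hA_def, ha_def]
    field_simp
    ring
  have hBa : B a = a := by
    simp only [hB_def, ha_def]
    field_simp
    ring
  have hψa : ψ a = 0 := by
    simp only [hψ_def, hAa, hBa, Real.log_one]
    ring
  -- the target value
  set L : ℝ := -Real.log (1 - lam) with hL_def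
  have hL : 0 < L := by
    have hlog : Real.log (1 - lam) < 0 :=
      Real.log_neg (by linarith) (by linarith)
    simp only [hL_def]
    linarith
  -- ψ tends to atTop at b from the left
  have hBb : B b = 0 := by
    simp only [hB_def, hb_def]
    rw [sub_eq_zero, div_mul_eq_mul_div, eq_div_iff hhalf.ne']
    ring
  have hcA : Continuous A := by simp only [hA_def]; fun_prop
  have hcB : Continuous B := by simp only [hB_def]; fun_prop
  have hBtend : Tendsto B (𝓝[<] b) (𝓝[>] 0) := by
    rw [tendsto_nhdsWithin_iff]
    constructor
    · have h : Tendsto B (𝓝[<] b) (𝓝 (B b)) :=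
        (hcB.tendsto b).mono_left nhdsWithin_le_nhds
      rwa [hBb] at h
    · exact eventually_nhdsWithin_of_forall (fun x hx => hBpos x hx)
  have hlogBtend : Tendsto (fun c => Real.log (B c)) (𝓝[<] b) atBot :=
    Real.tendsto_log_nhdsGT_zero.comp hBtend
  have hψtend : Tendsto ψ (𝓝[<] b) atTop := by
    have h1 : Tendsto (fun c => b * Real.log c - (b + 2) * Real.log (A c)) (𝓝[<] b)
        (𝓝 (b * Real.log b - (b + 2) * Real.log (A b))) := by
      apply Tendsto.mono_left _ nhdsWithin_le_nhds
      have l1 : ContinuousAt (fun c : ℝ => Real.log c) b := Real.continuousAt_log hb.ne'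
      have l2 : ContinuousAt (fun c : ℝ => Real.log (A c)) b :=
        (hcA.continuousAt).log (hApos b hb).ne'
      exact (continuousAt_const.mul l1).sub (continuousAt_const.mul l2)
    have h2 : Tendsto (fun c => -(b * Real.log (B c))) (𝓝[<] b) atTop := by
      have := hlogBtend.const_mul_atBot (div_pos hu hhalf)
      exact tendsto_neg_atBot_atTop.comp this
    have := h1.add_atTop h2
    apply this.congr
    intro x
    simp only [hψ_def]
    ring
  -- find c' ∈ (a,b) with L < ψ c'
  obtain ⟨c', hc'mem, hc'L⟩ : ∃ c', c' ∈ Ioo a b ∧ L < ψ c' := by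
    have h1 : ∀ᶠ x in 𝓝[<] b, L < ψ x := hψtend.eventually_gt_atTop L
    have h2 : ∀ᶠ x in 𝓝[<] b, x ∈ Ioo a b := by
      have : Ioo a b ∈ 𝓝[<] b := Ioo_mem_nhdsLT_of_mem ⟨hab, le_refl b⟩
      exact eventually_of_mem this (fun x hx => hx)
    obtain ⟨x, hx1, hx2⟩ := (h1.and h2).exists
    exact ⟨x, hx2, hx1⟩
  -- IVT on [a, c']
  have hsub : Icc a c' ⊆ Ico a b := fun x hx => ⟨hx.1, lt_of_le_of_lt hx.2 hc'mem.2⟩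
  have hIVT : L ∈ ψ '' Icc a c' := by
    apply intermediate_value_Icc hc'mem.1.le (hcont.mono hsub)
    rw [hψa]
    exact ⟨hL.le, hc'L.le⟩
  obtain ⟨c, hcmem, hψc⟩ := hIVT
  have hca : a < c := by
    rcases lt_or_eq_of_le hcmem.1 with h | h
    · exact h
    · exfalso
      rw [← h, hψa] at hψc
      linarith
  have hcIoo : c ∈ Ioo a b := ⟨hca, lt_of_le_of_lt hcmem.2 hc'mem.2⟩
  refine ⟨c, ⟨hcIoo, (hstar c hcIoo).mpr hψc⟩, ?_⟩
  rintro y ⟨hy, hfy⟩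
  have hψy := (hstar y hy).mp hfy
  exact hmono.injOn (Ioo_subset_Ico_self hy) (Ioo_subset_Ico_self hcIoo)
    (hψy.trans hψc.symm)
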